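/- Let q_{12}, q_{13}, q_{23} be indeterminates. Index the 6 chambers of the braid arrangement A_2 in ℝ³ by the permutations σ of {1,2,3} (the chamber {x_{σ(1)} > x_{σ(2)} > x_{σ(3)}}), and define the 6 × 6 Varchenko matrix M by M(σ, τ) = ∏ q_{ij} over all pairs i < j such that i and j appear in opposite relative orders in σ and τ. Then det M = (1 − q_{12}² q_{13}² q_{23}²) · (1 − q_{12}²)² · (1 − q_{13}²)² · (1 − q_{23}²)². -/
import Mathlib

lemma det_fromBlocks_comm_aux {n : Type*} [DecidableEq n] [Fintype n] {R : Type*} [CommRing R]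
    (A B : Matrix n n R) :
    (Matrix.fromBlocks A B B A).det = (A + B).det * (A - B).det := by
  have key : Matrix.fromBlocks 1 1 0 1 * Matrix.fromBlocks A B B A *
      Matrix.fromBlocks (1 : Matrix n n R) (-1) 0 1 =
      Matrix.fromBlocks (A + B) 0 B (A - B) := by
    simp only [Matrix.fromBlocks_multiply, Matrix.one_mul, Matrix.mul_one, Matrix.zero_mul,
      Matrix.mul_zero, Matrix.mul_neg, Matrix.mul_one, Matrix.neg_mul, Matrix.one_mul,
      zero_add, add_zero, neg_one_smul, sub_eq_add_neg, neg_smul, one_smul]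
    congr 1 <;> abel
  have h := congrArg Matrix.det key
  rw [Matrix.det_mul, Matrix.det_mul, Matrix.det_fromBlocks_zero₂₁,
    Matrix.det_fromBlocks_zero₂₁, Matrix.det_fromBlocks_zero₁₂] at h
  simpa using h

set_option maxRecDepth 40000 in
set_option maxHeartbeats 1000000 in
/-- Varchenko determinant of the braid arrangement `A_2`: with chambers indexed by
permutations of `{1,2,3}` and entry the product of the weights of the separating
hyperplanes, `det M = (1 − q₁₂²q₁₃²q₂₃²)(1 − q₁₂²)²(1 − q₁₃²)²(1 − q₂₃²)²`. -/
theorem A2_varchenko (R : Type*) [CommRing R] (q12 q13 q23 : R)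
    (M : Matrix (Equiv.Perm (Fin 3)) (Equiv.Perm (Fin 3)) R)
    (hM : ∀ σ τ : Equiv.Perm (Fin 3), M σ τ =
      (if (σ⁻¹ 0 < σ⁻¹ 1 ↔ τ⁻¹ 0 < τ⁻¹ 1) then 1 else q12) *
      (if (σ⁻¹ 0 < σ⁻¹ 2 ↔ τ⁻¹ 0 < τ⁻¹ 2) then 1 else q13) *
      (if (σ⁻¹ 1 < σ⁻¹ 2 ↔ τ⁻¹ 1 < τ⁻¹ 2) then 1 else q23)) :
    M.det = (1 - q12 ^ 2 * q13 ^ 2 * q23 ^ 2) *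
      (1 - q12 ^ 2) ^ 2 * (1 - q13 ^ 2) ^ 2 * (1 - q23 ^ 2) ^ 2 := by
  classical
  let p : Fin 3 ⊕ Fin 3 → Equiv.Perm (Fin 3) :=
    Sum.elim ![1, Equiv.swap 0 1, Equiv.swap 1 2]
      ![Equiv.swap 0 2, Equiv.swap 1 2 * Equiv.swap 0 1, Equiv.swap 0 1 * Equiv.swap 1 2]
  have hbij : Function.Bijective p := by decide
  let e : Fin 3 ⊕ Fin 3 ≃ Equiv.Perm (Fin 3) := Equiv.ofBijective p hbij
  have h1 : M.det = (M.submatrix e e).det :=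
    (Matrix.det_submatrix_equiv_self e M).symm
  set A : Matrix (Fin 3) (Fin 3) R :=
    !![1, q12, q23; q12, 1, q12*q23; q23, q12*q23, 1] with hA
  set B : Matrix (Fin 3) (Fin 3) R :=
    !![q12*q13*q23, q13*q23, q12*q13; q13*q23, q12*q13*q23, q13;
       q12*q13, q13, q12*q13*q23] with hB
  have h2 : M.submatrix e e = Matrix.fromBlocks A B B A := by
    ext i j
    rcases i with i | i <;> rcases j with j | j <;> fin_cases i <;> fin_cases j <;>
      simp only [Matrix.submatrix_apply, hM, e, Equiv.ofBijective_apply, p, Sum.elim_inl,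
        Sum.elim_inr, Matrix.fromBlocks_apply₁₁, Matrix.fromBlocks_apply₁₂,
        Matrix.fromBlocks_apply₂₁, Matrix.fromBlocks_apply₂₂, hA, hB,
        Matrix.cons_val', Matrix.cons_val_zero, Matrix.cons_val_one, Matrix.head_cons,
        Matrix.cons_val_succ, Matrix.cons_val_fin_one, Matrix.empty_val',
        Matrix.head_fin_const, Matrix.of_apply] <;>
      (repeat' first
        | rw [if_pos (by decide)]
        | rw [if_neg (by decide)]) <;>
      simp <;> ring
  rw [h1, h2, det_fromBlocks_comm_aux]
  simp [hA, hB, Matrix.det_fin_three, Matrix.add_apply, Matrix.sub_apply]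
  ring
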